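/- arXiv:2001.06771 — 2 statements merged into one kernel-verified Lean document; each statement's English description precedes it below -/
import Mathlib

section
/- Consider the SODE in dimension n = 3 given by ẍ = zt, ÿ = 0, z̈ = x, i.e. F¹ = zt, F² = 0, F³ = x in coordinates (t, x, y, z, u, v, w). The smooth function L := uw + v²/2 + x²/2 + t z²/2 on ℝ⁷ satisfies Γ(∂L/∂u^a) = ∂L/∂x^a for a = 1, 2, 3, and its velocity Hessian (∂²L/∂u^a∂u^b) is the constant symmetric matrix with rows (0,0,1), (0,1,0), (1,0,0), which has determinant −1 ≠ 0. Hence this system is variational: L is a regular Lagrangian whose Euler–Lagrange equations are equivalent to the system. -/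
/- Setting: the evolution space E = ℝ × ℝ^n × ℝ^n with coordinates (t, x^a, u^a),
   a SODE ẍ^a = F^a(t,x,ẋ), and all the associated geometric objects. -/

noncomputable section

namespace IP

/-- The evolution space ℝ^{1+2n} with coordinates (t, x, u). -/
abbrev E (n : ℕ) : Type := ℝ × (Fin n → ℝ) × (Fin n → ℝ)

variable {n : ℕ}

/-- the coordinate vector ∂/∂t -/
def et (n : ℕ) : E n := (1, 0, 0)

/-- the coordinate vector ∂/∂x^a -/
def ex (a : Fin n) : E n := (0, Pi.single a 1, 0)

/-- the coordinate vector ∂/∂u^a -/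
def eu (a : Fin n) : E n := (0, 0, Pi.single a 1)

/-- the SODE vector field Γ = ∂/∂t + u^a ∂/∂x^a + F^a ∂/∂u^a (its value at p) -/
def GamV (F : Fin n → E n → ℝ) (p : E n) : E n := (1, p.2.2, fun a => F a p)

/-- Γ acting on functions as a first-order differential operator -/
def Gam (F : Fin n → E n → ℝ) (f : E n → ℝ) (p : E n) : ℝ := fderiv ℝ f p (GamV F p)

/-- the nonlinear connection coefficients Γ^a_b = -(1/2) ∂F^a/∂u^b -/
def Gc (F : Fin n → E n → ℝ) (a b : Fin n) (p : E n) : ℝ :=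
  -(1 / 2) * fderiv ℝ (F a) p (eu b)

/-- the Jacobi endomorphism Φ^a_b = -∂F^a/∂x^b - Γ^c_b Γ^a_c - Γ(Γ^a_b) -/
def Phi (F : Fin n → E n → ℝ) (a b : Fin n) (p : E n) : ℝ :=
  -(fderiv ℝ (F a) p (ex b)) - (∑ c, Gc F c b p * Gc F a c p) - Gam F (Gc F a b) p

/-- the contact 1-form θ^a = dx^a - u^a dt -/
def theta (a : Fin n) (p v : E n) : ℝ := v.2.1 a - p.2.2 a * v.1

/-- the 1-form ψ^a = du^a - F^a dt + Γ^a_b θ^b -/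
def psi (F : Fin n → E n → ℝ) (a : Fin n) (p v : E n) : ℝ :=
  v.2.2 a - F a p * v.1 + ∑ b, Gc F a b p * theta b p v

/-- the vertical vector field V_a = ∂/∂u^a -/
def Vv (a : Fin n) : E n := eu a

/-- the horizontal vector field H_a = ∂/∂x^a - Γ^b_a ∂/∂u^b (its value at p) -/
def Hv (F : Fin n → E n → ℝ) (a : Fin n) (p : E n) : E n :=
  (0, Pi.single a 1, fun b => -(Gc F b a p))

/-- exterior derivative of a 1-form, evaluated on (constant extensions of) vectors -/
def d1 (ω : E n → E n → ℝ) (p v w : E n) : ℝ :=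
  fderiv ℝ (fun q => ω q w) p v - fderiv ℝ (fun q => ω q v) p w

/-- exterior derivative of a 2-form, evaluated on (constant extensions of) vectors -/
def d2 (Ω : E n → E n → E n → ℝ) (p v1 v2 v3 : E n) : ℝ :=
  fderiv ℝ (fun q => Ω q v2 v3) p v1 - fderiv ℝ (fun q => Ω q v1 v3) p v2 +
    fderiv ℝ (fun q => Ω q v1 v2) p v3

/-- Lie bracket of vector fields on E -/
def lie (X Y : E n → E n) (p : E n) : E n := fderiv ℝ Y p (X p) - fderiv ℝ X p (Y p)

/-- the four Helmholtz conditions for a multiplier matrix g on U -/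
def Helmholtz (F : Fin n → E n → ℝ) (U : Set (E n)) (g : Fin n → Fin n → E n → ℝ) : Prop :=
  (∀ p ∈ U, ∀ a b, g a b p = g b a p) ∧
  (∀ p ∈ U, ∀ a b, Gam F (g a b) p =
      (∑ c, g a c p * Gc F c b p) + ∑ c, g b c p * Gc F c a p) ∧
  (∀ p ∈ U, ∀ a b, (∑ c, g a c p * Phi F c b p) = ∑ c, g b c p * Phi F c a p) ∧
  (∀ p ∈ U, ∀ a b c, fderiv ℝ (g a b) p (eu c) = fderiv ℝ (g a c) p (eu b))

/-- the curvature components R^d_{ef} -/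
def Rcoord (F : Fin n → E n → ℝ) (d e f : Fin n) (p : E n) : ℝ :=
  (1 / 2) * (fderiv ℝ (fun q => fderiv ℝ (F d) q (eu f)) p (ex e)
    - fderiv ℝ (fun q => fderiv ℝ (F d) q (eu e)) p (ex f)
    + (1 / 2) * ((∑ c, fderiv ℝ (F c) p (eu e) *
            fderiv ℝ (fun q => fderiv ℝ (F d) q (eu f)) p (eu c))
        - ∑ c, fderiv ℝ (F c) p (eu f) *
            fderiv ℝ (fun q => fderiv ℝ (F d) q (eu e)) p (eu c)))

/-- wedge product of two 1-forms -/
def w11 (α β : E n → E n → ℝ) (p v w : E n) : ℝ := α p v * β p w - α p w * β p v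

/-- wedge product of a 1-form with a 2-form -/
def w12 (α : E n → E n → ℝ) (Ω : E n → E n → E n → ℝ) (p v1 v2 v3 : E n) : ℝ :=
  α p v1 * Ω p v2 v3 - α p v2 * Ω p v1 v3 + α p v3 * Ω p v1 v2

/-- a smooth 1-form on U -/
def Smooth1 (U : Set (E n)) (α : E n → E n → ℝ) : Prop :=
  (∀ v, ContDiffOn ℝ (⊤ : ℕ∞) (fun q => α q v) U) ∧ ∀ p ∈ U, IsLinearMap ℝ (α p)

/-- the 2-form Ω = g_{ab} ψ^a ∧ θ^b -/
def OmegaG (F : Fin n → E n → ℝ) (g : Fin n → Fin n → E n → ℝ) :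
    E n → E n → E n → ℝ :=
  fun q v w => ∑ a, ∑ b, g a b q * w11 (psi F a) (theta b) q v w

end IP
/- Eigenstructure of Φ: distinct smooth eigenvalues, eigenvector fields X_a forming
   a basis at every point, dual coframe φ^a, the lifted eigenforms φ^{aV}, φ^{aH},
   the 2-forms ω^{ab}, ω^a, the structure functions τ and the curvature functions R. -/

namespace IP

variable {n : ℕ}

/-- the vertical eigenform φ^{aV} = φ^a_c ψ^c -/
def phiV (F : Fin n → E n → ℝ) (phc : Fin n → Fin n → E n → ℝ) (a : Fin n)
    (p v : E n) : ℝ :=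
  ∑ c, phc a c p * psi F c p v

/-- the horizontal eigenform φ^{aH} = φ^a_c θ^c -/
def phiH (phc : Fin n → Fin n → E n → ℝ) (a : Fin n) (p v : E n) : ℝ :=
  ∑ c, phc a c p * theta c p v

/-- the vertical eigenvector field X_a^V = X^c_a V_c -/
def XVf (X : Fin n → Fin n → E n → ℝ) (a : Fin n) (p : E n) : E n :=
  (0, 0, fun c => X a c p)

/-- the horizontal eigenvector field X_a^H = X^c_a H_c -/
def XHf (F : Fin n → E n → ℝ) (X : Fin n → Fin n → E n → ℝ) (a : Fin n) (p : E n) : E n :=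
  (0, fun c => X a c p, fun b => -∑ c, X a c p * Gc F b c p)

/-- the 2-forms ω^{ab} = (1/2)(φ^{aV} ∧ φ^{bH} + φ^{bV} ∧ φ^{aH}) -/
def omab (F : Fin n → E n → ℝ) (phc : Fin n → Fin n → E n → ℝ) (a b : Fin n)
    (p v w : E n) : ℝ :=
  (1 / 2) * (w11 (phiV F phc a) (phiH phc b) p v w + w11 (phiV F phc b) (phiH phc a) p v w)

/-- the 2-forms ω^a = φ^{aV} ∧ φ^{aH} -/
def oma (F : Fin n → E n → ℝ) (phc : Fin n → Fin n → E n → ℝ) (a : Fin n)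
    (p v w : E n) : ℝ :=
  w11 (phiV F phc a) (phiH phc a) p v w

/-- the structure functions τ^{aΓ}_b = -dφ^{aV}(Γ, X_b^V) -/
def tauG (F : Fin n → E n → ℝ) (X phc : Fin n → Fin n → E n → ℝ) (a b : Fin n)
    (p : E n) : ℝ :=
  -(d1 (phiV F phc a) p (GamV F p) (XVf X b p))

/-- the structure functions τ^{aH}_{bc} = dφ^{aV}(X_c^V, X_b^H) -/
def tauH (F : Fin n → E n → ℝ) (X phc : Fin n → Fin n → E n → ℝ) (a b c : Fin n)
    (p : E n) : ℝ :=
  d1 (phiV F phc a) p (XVf X c p) (XHf F X b p)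

/-- the structure functions τ^{aV}_{bc} = -dφ^{aH}(X_b^V, X_c^H) -/
def tauV (F : Fin n → E n → ℝ) (X phc : Fin n → Fin n → E n → ℝ) (a b c : Fin n)
    (p : E n) : ℝ :=
  -(d1 (phiH phc a) p (XVf X b p) (XHf F X c p))

/-- the curvature functions R^a_{bc} = φ^a_d X^e_b X^f_c R^d_{ef} -/
def Rphi (F : Fin n → E n → ℝ) (X phc : Fin n → Fin n → E n → ℝ) (a b c : Fin n)
    (p : E n) : ℝ :=
  ∑ d, ∑ e, ∑ f, phc a d p * X b e p * X c f p * Rcoord F d e f p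

/-- The standing hypotheses: F smooth, Φ diagonalisable on U with smooth eigenvalues λ_a,
pairwise distinct at every point, smooth eigenvector fields X_a (components X^c_a = `X a c`)
forming a basis of ℝ^n at every point, and dual coframe φ^a (components φ^a_c = `phc a c`). -/
structure EigenData (F : Fin n → E n → ℝ) (U : Set (E n)) (lam : Fin n → E n → ℝ)
    (X phc : Fin n → Fin n → E n → ℝ) : Prop where
  smooth_F : ∀ a, ContDiffOn ℝ (⊤ : ℕ∞) (F a) U
  smooth_lam : ∀ a, ContDiffOn ℝ (⊤ : ℕ∞) (lam a) U
  smooth_X : ∀ a c, ContDiffOn ℝ (⊤ : ℕ∞) (X a c) U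
  smooth_phc : ∀ a c, ContDiffOn ℝ (⊤ : ℕ∞) (phc a c) U
  distinct : ∀ p ∈ U, ∀ a b, a ≠ b → lam a p ≠ lam b p
  eigen : ∀ p ∈ U, ∀ a c, (∑ d, Phi F c d p * X a d p) = lam a p * X a c p
  dual : ∀ p ∈ U, ∀ a b, (∑ c, phc a c p * X b c p) = if a = b then (1 : ℝ) else 0

/-- `dη ∈ ⟨S⟩`: the 3-form η lies in the ideal generated by the 2-forms in S
(with smooth 1-form coefficients), as forms on U -/
def InIdeal (U : Set (E n)) (S : Set (E n → E n → E n → ℝ))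
    (η : E n → E n → E n → E n → ℝ) : Prop :=
  ∃ (m : ℕ) (Ω : Fin m → E n → E n → E n → ℝ) (α : Fin m → E n → E n → ℝ),
    (∀ j, Ω j ∈ S) ∧ (∀ j, Smooth1 U (α j)) ∧
      ∀ p ∈ U, ∀ v1 v2 v3, η p v1 v2 v3 = ∑ j, w12 (α j) (Ω j) p v1 v2 v3

/-- the C^∞(U)-module Σ⁰ spanned by {ω^{ab} : a ≤ b} (as forms on U) -/
def Sigma0 (F : Fin n → E n → ℝ) (phc : Fin n → Fin n → E n → ℝ) (U : Set (E n)) :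
    Set (E n → E n → E n → ℝ) :=
  {ω | ∃ r : Fin n → Fin n → E n → ℝ,
      (∀ a b, ContDiffOn ℝ (⊤ : ℕ∞) (r a b) U) ∧
      ∀ p ∈ U, ∀ v w, ω p v w =
        ∑ a, ∑ b, if a ≤ b then r a b p * omab F phc a b p v w else 0}

/-- the C^∞(U)-module Σ̃¹ spanned by {ω^a} (as forms on U) -/
def SigmaT1 (F : Fin n → E n → ℝ) (phc : Fin n → Fin n → E n → ℝ) (U : Set (E n)) :
    Set (E n → E n → E n → ℝ) :=
  {ω | ∃ r : Fin n → E n → ℝ,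
      (∀ a, ContDiffOn ℝ (⊤ : ℕ∞) (r a) U) ∧
      ∀ p ∈ U, ∀ v w, ω p v w = ∑ a, r a p * oma F phc a p v w}

/-- one step of the differential-ideal recursion: {ω ∈ S : dω ∈ ⟨S⟩} -/
def Next (U : Set (E n)) (S : Set (E n → E n → E n → ℝ)) : Set (E n → E n → E n → ℝ) :=
  {ω | ω ∈ S ∧ InIdeal U S (d2 ω)}

/-- the sequence Σ⁰, Σ¹, Σ², …  (`SigSeq F phc U i` is Σ^i) -/
def SigSeq (F : Fin n → E n → ℝ) (phc : Fin n → Fin n → E n → ℝ) (U : Set (E n)) :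
    ℕ → Set (E n → E n → E n → ℝ)
  | 0 => Sigma0 F phc U
  | k + 1 => Next U (SigSeq F phc U k)

/-- the sequence Σ̃¹, Σ̃², …  (`SigTSeq F phc U i` is Σ̃^{i+1}) -/
def SigTSeq (F : Fin n → E n → ℝ) (phc : Fin n → Fin n → E n → ℝ) (U : Set (E n)) :
    ℕ → Set (E n → E n → E n → ℝ)
  | 0 => SigmaT1 F phc U
  | k + 1 => Next U (SigTSeq F phc U k)

def ia (n : ℕ) (a : Fin n) : Fin (2 * n) := ⟨2 * a.1, by have := a.2; omega⟩

def ib (n : ℕ) (a : Fin n) : Fin (2 * n) := ⟨2 * a.1 + 1, by have := a.2; omega⟩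

/-- the wedge product ω_1 ∧ ω_2 ∧ ⋯ ∧ ω_n of n 2-forms, as a 2n-form -/
def WedgeN (ωs : Fin n → E n → E n → E n → ℝ) (p : E n) (v : Fin (2 * n) → E n) : ℝ :=
  (1 / 2 ^ n) * ∑ σ : Equiv.Perm (Fin (2 * n)),
    ((Equiv.Perm.sign σ : ℤ) : ℝ) * ∏ a, ωs a p (v (σ (ia n a))) (v (σ (ib n a)))

/-- Frobenius integrability of the eigen co-distribution D_a^⊥ = span{φ^{aV}, φ^{aH}} -/
def Integrable1 (F : Fin n → E n → ℝ) (phc : Fin n → Fin n → E n → ℝ) (U : Set (E n))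
    (a : Fin n) : Prop :=
  ∃ α β γ δ : E n → E n → ℝ,
    Smooth1 U α ∧ Smooth1 U β ∧ Smooth1 U γ ∧ Smooth1 U δ ∧
    (∀ p ∈ U, ∀ v w, d1 (phiV F phc a) p v w =
        w11 α (phiV F phc a) p v w + w11 β (phiH phc a) p v w) ∧
    (∀ p ∈ U, ∀ v w, d1 (phiH phc a) p v w =
        w11 γ (phiV F phc a) p v w + w11 δ (phiH phc a) p v w)

end IP

namespace IP

/-- coordinate projection t -/
def pt3 : E 3 →L[ℝ] ℝ := ContinuousLinearMap.fst ℝ ℝ ((Fin 3 → ℝ) × (Fin 3 → ℝ))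

/-- coordinate projection x^a -/
def px3 (a : Fin 3) : E 3 →L[ℝ] ℝ :=
  (ContinuousLinearMap.proj a).comp
    ((ContinuousLinearMap.fst ℝ (Fin 3 → ℝ) (Fin 3 → ℝ)).comp
      (ContinuousLinearMap.snd ℝ ℝ ((Fin 3 → ℝ) × (Fin 3 → ℝ))))

/-- coordinate projection u^a -/
def pu3 (a : Fin 3) : E 3 →L[ℝ] ℝ :=
  (ContinuousLinearMap.proj a).comp
    ((ContinuousLinearMap.snd ℝ (Fin 3 → ℝ) (Fin 3 → ℝ)).comp
      (ContinuousLinearMap.snd ℝ ℝ ((Fin 3 → ℝ) × (Fin 3 → ℝ))))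

/-- the Lagrangian -/
def Lag : E 3 → ℝ := fun s : E 3 =>
  s.2.2 0 * s.2.2 2 + (s.2.2 1) ^ 2 / 2 + (s.2.1 0) ^ 2 / 2 + s.1 * (s.2.1 2) ^ 2 / 2

/-- the derivative of the Lagrangian at p -/
def DLag (p : E 3) : E 3 →L[ℝ] ℝ :=
  p.2.2 2 • pu3 0 + p.2.2 0 • pu3 2 + p.2.2 1 • pu3 1 + p.2.1 0 • px3 0 +
    ((p.2.1 2) ^ 2 / 2) • pt3 + (p.1 * p.2.1 2) • px3 2

lemma hasFDerivLag (p : E 3) : HasFDerivAt Lag (DLag p) p := by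
  have h0 : HasFDerivAt (fun s : E 3 => s.2.2 0) (pu3 0) p := (pu3 0).hasFDerivAt
  have h1 : HasFDerivAt (fun s : E 3 => s.2.2 1) (pu3 1) p := (pu3 1).hasFDerivAt
  have h2 : HasFDerivAt (fun s : E 3 => s.2.2 2) (pu3 2) p := (pu3 2).hasFDerivAt
  have hx0 : HasFDerivAt (fun s : E 3 => s.2.1 0) (px3 0) p := (px3 0).hasFDerivAt
  have hx2 : HasFDerivAt (fun s : E 3 => s.2.1 2) (px3 2) p := (px3 2).hasFDerivAt
  have ht : HasFDerivAt (fun s : E 3 => s.1) pt3 p := pt3.hasFDerivAt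
  have heq : Lag = fun s : E 3 => s.2.2 0 * s.2.2 2 + (s.2.2 1 * s.2.2 1) * (1/2) +
      (s.2.1 0 * s.2.1 0) * (1/2) + s.1 * ((s.2.1 2 * s.2.1 2) * (1/2)) := by
    funext s; simp only [Lag]; ring
  rw [heq]
  have h := (((h0.mul h2).add ((h1.mul h1).mul_const (1/2:ℝ))).add
      ((hx0.mul hx0).mul_const (1/2:ℝ))).add (ht.mul ((hx2.mul hx2).mul_const (1/2:ℝ)))
  refine h.congr_fderiv ?_
  ext v <;> simp [DLag, pu3, px3, pt3, smul_eq_mul] <;> try ring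

lemma fderivLag (q : E 3) : fderiv ℝ Lag q = DLag q := (hasFDerivLag q).fderiv

lemma pu3_single (a b : Fin 3) :
    pu3 b ((0, 0, Pi.single a 1) : E 3) = if a = b then 1 else 0 := by
  simp [pu3, Pi.single_apply, eq_comm]

lemma pu3_zero2 (a : Fin 3) (t : ℝ) (x : Fin 3 → ℝ) : pu3 a ((t, x, 0) : E 3) = 0 := by
  simp [pu3]

lemma px3_eu (a b : Fin 3) : px3 b (eu a) = 0 := by simp [px3, eu]

lemma pt3_eu (a : Fin 3) : pt3 (eu a) = 0 := by simp [pt3, eu]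

lemma dLag_eu (q : E 3) (a : Fin 3) :
    fderiv ℝ Lag q (eu a) =
      q.2.2 2 * (if a = 0 then 1 else 0) + q.2.2 1 * (if a = 1 then 1 else 0) +
        q.2.2 0 * (if a = 2 then 1 else 0) := by
  rw [fderivLag]
  show DLag q ((0, 0, Pi.single a 1) : E 3) = _
  simp only [DLag, ContinuousLinearMap.add_apply, ContinuousLinearMap.smul_apply,
    pu3_single]
  have h1 : px3 0 ((0, 0, Pi.single a 1) : E 3) = 0 := by simp [px3]
  have h2 : px3 2 ((0, 0, Pi.single a 1) : E 3) = 0 := by simp [px3]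
  have h3 : pt3 ((0, 0, Pi.single a 1) : E 3) = 0 := by simp [pt3]
  rw [h1, h2, h3]
  simp only [smul_eq_mul, mul_zero]
  ring

lemma gLag_eq (a : Fin 3) :
    (fun q => fderiv ℝ Lag q (eu a)) =
      (fun q : E 3 =>
        q.2.2 2 * (if a = 0 then 1 else 0) + q.2.2 1 * (if a = 1 then 1 else 0) +
          q.2.2 0 * (if a = 2 then 1 else 0)) := by
  funext q; exact dLag_eu q a

lemma gLag_clm (a : Fin 3) :
    (fun q : E 3 =>
        q.2.2 2 * (if a = 0 then 1 else 0) + q.2.2 1 * (if a = 1 then 1 else 0) +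
          q.2.2 0 * (if a = 2 then 1 else 0)) =
      ⇑((if a = 0 then (1:ℝ) else 0) • pu3 2 + (if a = 1 then (1:ℝ) else 0) • pu3 1 +
        (if a = 2 then (1:ℝ) else 0) • pu3 0) := by
  funext q
  fin_cases a <;> simp [pu3]

/-- for the SODE ẍ = zt, ÿ = 0, z̈ = x, the function
L = uw + v²/2 + x²/2 + tz²/2 satisfies the Euler–Lagrange equations
Γ(∂L/∂u^a) = ∂L/∂x^a, its velocity Hessian is the constant matrix
!![0,0,1; 0,1,0; 1,0,0], and that matrix has determinant -1 ≠ 0; hence L is a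
regular Lagrangian for this system. -/
theorem stmt18 :
    (∀ p : E 3, ∀ a : Fin 3,
      Gam (![fun p => p.2.1 2 * p.1, fun _ => 0, fun p => p.2.1 0])
        (fun q => fderiv ℝ
          (fun s : E 3 => s.2.2 0 * s.2.2 2 + (s.2.2 1) ^ 2 / 2 + (s.2.1 0) ^ 2 / 2 +
            s.1 * (s.2.1 2) ^ 2 / 2) q (eu a)) p
      = fderiv ℝ
          (fun s : E 3 => s.2.2 0 * s.2.2 2 + (s.2.2 1) ^ 2 / 2 + (s.2.1 0) ^ 2 / 2 +
            s.1 * (s.2.1 2) ^ 2 / 2) p (ex a)) ∧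
    (∀ p : E 3, ∀ a b : Fin 3,
      fderiv ℝ (fun q => fderiv ℝ
          (fun s : E 3 => s.2.2 0 * s.2.2 2 + (s.2.2 1) ^ 2 / 2 + (s.2.1 0) ^ 2 / 2 +
            s.1 * (s.2.1 2) ^ 2 / 2) q (eu a)) p (eu b)
        = !![(0:ℝ), 0, 1; 0, 1, 0; 1, 0, 0] a b) ∧
    (!![(0:ℝ), 0, 1; 0, 1, 0; 1, 0, 0].det = -1 ∧ (-1 : ℝ) ≠ 0) := by
  have hLag : (fun s : E 3 => s.2.2 0 * s.2.2 2 + (s.2.2 1) ^ 2 / 2 + (s.2.1 0) ^ 2 / 2 +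
      s.1 * (s.2.1 2) ^ 2 / 2) = Lag := rfl
  refine ⟨?_, ?_, ?_, by norm_num⟩
  · intro p a
    rw [hLag]
    unfold Gam
    rw [gLag_eq a, gLag_clm a, ContinuousLinearMap.fderiv, fderivLag]
    fin_cases a <;>
      · simp [GamV, DLag, pu3, px3, pt3, ex, Pi.single_apply, smul_eq_mul]
        try ring
  · intro p a b
    rw [hLag, gLag_eq a, gLag_clm a, ContinuousLinearMap.fderiv]
    fin_cases a <;> fin_cases b <;>
      · simp [eu, pu3, Pi.single_apply, smul_eq_mul, Matrix.cons_val_zero,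
          Matrix.cons_val_one, Matrix.head_cons, Matrix.head_fin_const,
          Matrix.cons_val', Matrix.empty_val', Matrix.cons_val_fin_one]
        try norm_num [Matrix.vecHead, Matrix.vecTail]
  · norm_num [Matrix.det_fin_three, Matrix.cons_val_zero, Matrix.cons_val_one,
      Matrix.head_cons, Matrix.head_fin_const, Matrix.cons_val', Matrix.empty_val',
      Matrix.cons_val_fin_one, Matrix.cons_val_two]

end IP
end
end

section
/- Consider the SODE in dimension n = 3 given by ẍ = xż, ÿ = x, z̈ = x, i.e. F¹ = xw, F² = x, F³ = x in coordinates (t, x, y, z, u, v, w). Then every point of the domain D := {(t,x,y,z,u,v,w) ∈ ℝ⁷ : w² − 2u > 0, u ≠ 0} has an open neighborhood W ⊆ D on which there exists a smooth symmetric matrix-valued function g = (g_{ab}) with det g nowhere zero satisfying the four Helmholtz conditions; that is, this system is locally variational on D. -/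
/- Setting: the evolution space E = ℝ × ℝ^n × ℝ^n with coordinates (t, x^a, u^a),
   a SODE ẍ^a = F^a(t,x,ẋ), and all the associated geometric objects. -/

noncomputable section

namespace IP


noncomputable def cx3 (i : Fin 3) : E 3 →L[ℝ] ℝ :=
  (ContinuousLinearMap.proj i).comp ((ContinuousLinearMap.fst ℝ (Fin 3 → ℝ) (Fin 3 → ℝ)).comp
    (ContinuousLinearMap.snd ℝ ℝ ((Fin 3 → ℝ) × (Fin 3 → ℝ))))

noncomputable def cu3 (i : Fin 3) : E 3 →L[ℝ] ℝ :=
  (ContinuousLinearMap.proj i).comp ((ContinuousLinearMap.snd ℝ (Fin 3 → ℝ) (Fin 3 → ℝ)).comp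
    (ContinuousLinearMap.snd ℝ ℝ ((Fin 3 → ℝ) × (Fin 3 → ℝ))))

lemma hd_x3 (i : Fin 3) (p : E 3) : HasFDerivAt (fun q : E 3 => q.2.1 i) (cx3 i) p :=
  (cx3 i).hasFDerivAt

lemma hd_u3 (i : Fin 3) (p : E 3) : HasFDerivAt (fun q : E 3 => q.2.2 i) (cu3 i) p :=
  (cu3 i).hasFDerivAt

lemma fd_x3 (i : Fin 3) (p v : E 3) : fderiv ℝ (fun q : E 3 => q.2.1 i) p v = v.2.1 i := by
  rw [(hd_x3 i p).fderiv]; rfl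

lemma fd_F0 (p v : E 3) : fderiv ℝ (fun q : E 3 => q.2.1 0 * q.2.2 2) p v
    = p.2.1 0 * v.2.2 2 + p.2.2 2 * v.2.1 0 := by
  have h : HasFDerivAt (fun q : E 3 => q.2.1 0 * q.2.2 2) _ p := (hd_x3 0 p).mul (hd_u3 2 p)
  rw [h.fderiv]
  simp [cx3, cu3]

lemma fd_g02 (p v : E 3) : fderiv ℝ (fun q : E 3 => -(1/2) * q.2.2 2) p v
    = -(1/2) * v.2.2 2 := by
  rw [((hd_u3 2 p).const_mul (-(1/2) : ℝ)).fderiv]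
  simp [cu3]

lemma fd_gc02 (p v : E 3) : fderiv ℝ (fun q : E 3 => -(1/2) * q.2.1 0) p v
    = -(1/2) * v.2.1 0 := by
  rw [((hd_x3 0 p).const_mul (-(1/2) : ℝ)).fderiv]
  simp [cx3]

lemma fd_g22 (p v : E 3) :
    fderiv ℝ (fun q : E 3 => (1/2) * (q.2.2 2 * q.2.2 2 - q.2.2 0) - 1) p v
    = (1/2) * (2 * p.2.2 2 * v.2.2 2 - v.2.2 0) := by
  have h : HasFDerivAt (fun q : E 3 => (1/2) * (q.2.2 2 * q.2.2 2 - q.2.2 0) - 1) _ p :=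
    ((((hd_u3 2 p).mul (hd_u3 2 p)).sub (hd_u3 0 p)).const_mul ((1:ℝ)/2)).sub_const 1
  rw [h.fderiv]
  simp [cu3]
  ring

/-- the example SODE -/
def Fex : Fin 3 → E 3 → ℝ :=
  ![fun p => p.2.1 0 * p.2.2 2, fun p => p.2.1 0, fun p => p.2.1 0]

/-- the multiplier -/
def gex : Fin 3 → Fin 3 → E 3 → ℝ :=
  ![![fun _ => 1, fun _ => 0, fun p => -(1/2) * p.2.2 2],
    ![fun _ => 0, fun _ => -1, fun _ => 1],
    ![fun p => -(1/2) * p.2.2 2, fun _ => 1,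
      fun p => (1/2) * (p.2.2 2 * p.2.2 2 - p.2.2 0) - 1]]

lemma Gc_eq (a b : Fin 3) (p : E 3) :
    Gc Fex a b p = if a = 0 ∧ b = 2 then -(1/2) * p.2.1 0 else 0 := by
  fin_cases a <;> fin_cases b <;>
    simp [Gc, Fex, fd_F0, fd_x3, eu, Pi.single_apply]

lemma Gc_fun (a b : Fin 3) :
    Gc Fex a b = if a = 0 ∧ b = 2 then (fun p => -(1/2) * p.2.1 0) else fun _ => 0 := by
  funext p
  rw [Gc_eq]
  split <;> rfl

lemma GamGc (a b : Fin 3) (p : E 3) :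
    Gam Fex (Gc Fex a b) p = if a = 0 ∧ b = 2 then -(1/2) * p.2.2 0 else 0 := by
  rw [Gam, Gc_fun]
  split
  · rw [fd_gc02]; rfl
  · simp

lemma gamv_u (q : E 3) (i : Fin 3) : (GamV Fex q).2.2 i = Fex i q := rfl

lemma gamv_x (q : E 3) (i : Fin 3) : (GamV Fex q).2.1 i = q.2.2 i := rfl

lemma Phi_eq (a b : Fin 3) (p : E 3) :
    Phi Fex a b p =
      if b = 0 then (if a = 0 then -(p.2.2 2) else -1)
      else if a = 0 ∧ b = 2 then (1/2) * p.2.2 0 else 0 := by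
  fin_cases a <;> fin_cases b <;>
    (simp only [Phi, Gc_eq, GamGc, Fin.sum_univ_three];
     simp [Fex, fd_F0, fd_x3, ex, Pi.single_apply])

/-- the SODE ẍ = xż, ÿ = x, z̈ = x is locally variational on
D = {w² - 2u > 0, u ≠ 0}: every point of D has a neighborhood carrying a smooth
symmetric nondegenerate multiplier satisfying the four Helmholtz conditions. -/
theorem stmt19 :
    ∀ p ∈ {p : E 3 | 0 < (p.2.2 2) ^ 2 - 2 * p.2.2 0 ∧ p.2.2 0 ≠ 0},
      ∃ W : Set (E 3), IsOpen W ∧ p ∈ W ∧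
        W ⊆ {p : E 3 | 0 < (p.2.2 2) ^ 2 - 2 * p.2.2 0 ∧ p.2.2 0 ≠ 0} ∧
        ∃ g : Fin 3 → Fin 3 → E 3 → ℝ,
          (∀ a b, ContDiffOn ℝ (⊤ : ℕ∞) (g a b) W) ∧
          (∀ q ∈ W, (Matrix.of fun a b => g a b q).det ≠ 0) ∧
          Helmholtz (![fun p => p.2.1 0 * p.2.2 2, fun p => p.2.1 0, fun p => p.2.1 0])
            W g := by
  intro p hp
  refine ⟨{p : E 3 | 0 < (p.2.2 2) ^ 2 - 2 * p.2.2 0 ∧ p.2.2 0 ≠ 0}, ?_, hp,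
    le_refl _, gex, ?_, ?_, ?_⟩
  · have h1 : IsOpen {p : E 3 | 0 < (p.2.2 2) ^ 2 - 2 * p.2.2 0} := by
      apply isOpen_lt continuous_const
      fun_prop
    have h2 : IsOpen {p : E 3 | p.2.2 0 ≠ 0} := by
      apply isOpen_ne_fun ?_ continuous_const
      fun_prop
    exact h1.inter h2
  · intro a b
    have hc1 : ContDiff ℝ (⊤ : ℕ∞) (fun _ : E 3 => (1 : ℝ)) := contDiff_const
    have hc0 : ContDiff ℝ (⊤ : ℕ∞) (fun _ : E 3 => (0 : ℝ)) := contDiff_const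
    have hcm : ContDiff ℝ (⊤ : ℕ∞) (fun _ : E 3 => (-1 : ℝ)) := contDiff_const
    have hu2 : ContDiff ℝ (⊤ : ℕ∞) (fun q : E 3 => q.2.2 2) := (cu3 2).contDiff
    have hu0 : ContDiff ℝ (⊤ : ℕ∞) (fun q : E 3 => q.2.2 0) := (cu3 0).contDiff
    have h02 : ContDiff ℝ (⊤ : ℕ∞) (fun q : E 3 => -(1/2) * q.2.2 2) :=
      contDiff_const.mul hu2
    have h22 : ContDiff ℝ (⊤ : ℕ∞)
        (fun q : E 3 => (1/2) * (q.2.2 2 * q.2.2 2 - q.2.2 0) - 1) :=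
      (contDiff_const.mul ((hu2.mul hu2).sub hu0)).sub contDiff_const
    fin_cases a <;> fin_cases b <;>
      first
        | exact hc1.contDiffOn
        | exact hc0.contDiffOn
        | exact hcm.contDiffOn
        | exact h02.contDiffOn
        | exact h22.contDiffOn
  · intro q hq
    have h1 := hq.1
    have hdet : (Matrix.of fun a b => gex a b q).det
        = -(1/4) * ((q.2.2 2) ^ 2 - 2 * q.2.2 0) := by
      rw [Matrix.det_fin_three]
      simp only [Matrix.of_apply, gex, Matrix.cons_val_zero, Matrix.cons_val_one,
        Matrix.head_cons, Matrix.cons_val_two, Matrix.tail_cons]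
      ring
    rw [hdet]
    intro hc
    nlinarith
  · show Helmholtz Fex _ gex
    refine ⟨?_, ?_, ?_, ?_⟩
    · intro q hq a b
      fin_cases a <;> fin_cases b <;> simp [gex]
    · intro q hq a b
      fin_cases a <;> fin_cases b <;>
        simp only [Fin.zero_eta, Fin.mk_one, Fin.reduceFinMk, Gam, Fin.sum_univ_three, Gc_eq, gex, Matrix.cons_val_zero,
          Matrix.cons_val_one, Matrix.head_cons, Matrix.cons_val_two, Matrix.tail_cons,
          fd_g02, fd_g22, fderiv_const, Pi.zero_apply, ContinuousLinearMap.zero_apply,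
          gamv_u, gamv_x] <;>
        simp [Fex, Matrix.vecHead, Matrix.vecTail] <;> ring
    · intro q hq a b
      fin_cases a <;> fin_cases b <;> simp only [Fin.sum_univ_three, Phi_eq] <;>
        simp [gex] <;> ring
    · intro q hq a b c
      fin_cases a <;> fin_cases b <;> fin_cases c <;>
        simp only [Fin.zero_eta, Fin.mk_one, Fin.reduceFinMk, gex, Matrix.cons_val_zero, Matrix.cons_val_one, Matrix.head_cons,
          Matrix.cons_val_two, Matrix.tail_cons, fd_g02, fd_g22, fderiv_const,
          Pi.zero_apply, ContinuousLinearMap.zero_apply] <;>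
        simp [eu, Pi.single_apply]

end IP
end
end
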